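/- (Oshima's Lemma) Let Φ be an irreducible crystallographic root system, S ⊆ Π, β ∈ Φ⁺ with supp(β) ∩ S ≠ ∅. Then the parabolic subgroup W⟨Π\S⟩ acts transitively on the set of long roots in Φ_{S,β} and transitively on the set of short roots in Φ_{S,β}. -/

import Mathlib

open scoped RealInnerProductSpace
attribute [local instance] Classical.propDecidable
set_option linter.unusedSectionVars false
set_option linter.unusedVariables false
set_option maxHeartbeats 1000000


variable {E : Type*} [NormedAddCommGroup E] [InnerProductSpace ℝ E] [FiniteDimensional ℝ E]

/-- A finite reduced crystallographic root system spanning `E`. -/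
structure IsRootSystem (Φ : Finset E) : Prop where
  nonzero : ∀ γ ∈ Φ, γ ≠ (0 : E)
  span_top : Submodule.span ℝ (Φ : Set E) = ⊤
  reduced : ∀ γ ∈ Φ, ∀ t : ℝ, t • γ ∈ Φ → t = 1 ∨ t = -1
  reflect : ∀ γ ∈ Φ, ∀ δ ∈ Φ, δ - (2 * ⟪δ, γ⟫ / ⟪γ, γ⟫) • γ ∈ Φ
  cry : ∀ γ ∈ Φ, ∀ δ ∈ Φ, ∃ n : ℤ, 2 * ⟪δ, γ⟫ / ⟪γ, γ⟫ = (n : ℝ)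

/-- `Δ` is a simple system (base) for `Φ`, and `c γ a` is the coordinate of `γ`
on the simple root `a`. -/
structure IsBase (Φ Δ : Finset E) (c : E → E → ℝ) : Prop where
  subset : Δ ⊆ Φ
  indep : LinearIndependent ℝ (fun x : (Δ : Set E) => (x : E))
  repr : ∀ γ ∈ Φ, γ = ∑ a ∈ Δ, c γ a • a
  int : ∀ γ ∈ Φ, ∀ a ∈ Δ, ∃ n : ℤ, c γ a = (n : ℝ)
  sign : ∀ γ ∈ Φ, (∀ a ∈ Δ, 0 ≤ c γ a) ∨ (∀ a ∈ Δ, c γ a ≤ 0)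

/-- Irreducibility: no splitting into two nonempty mutually orthogonal parts. -/
def IsIrredSys (Φ : Finset E) : Prop :=
  ∀ s : Set E, s ⊆ (Φ : Set E) → (∀ x ∈ s, ∀ y ∈ (Φ : Set E) \ s, ⟪x, y⟫ = 0) →
    s = ∅ ∨ s = (Φ : Set E)

/-- `Φ_{S,β}`: roots whose coordinates on every simple root of `S` agree with those of `β`. -/
def lev (Φ : Finset E) (c : E → E → ℝ) (S : Finset E) (β : E) : Set E :=
  {γ | γ ∈ Φ ∧ ∀ a ∈ S, c γ a = c β a}

/-- The reflection through the hyperplane orthogonal to `γ`. -/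
noncomputable def sref (γ : E) : E ≃ₗᵢ[ℝ] E := Submodule.reflection (Submodule.span ℝ {γ})ᗮ

/-- The Weyl group, generated by the reflections in the roots. -/
noncomputable def weyl (Φ : Finset E) : Subgroup (E ≃ₗᵢ[ℝ] E) :=
  Subgroup.closure {g | ∃ γ ∈ Φ, g = sref γ}

-- L0: negation closure
lemma osh_neg {Φ : Finset E} (hΦ : IsRootSystem Φ) {γ : E} (hγ : γ ∈ Φ) : -γ ∈ Φ := by
  have h := hΦ.reflect γ hγ γ hγ
  have hne : ⟪γ, γ⟫ ≠ 0 := inner_self_ne_zero.mpr (hΦ.nonzero γ hγ)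
  rw [show 2 * ⟪γ, γ⟫ / ⟪γ, γ⟫ = 2 by field_simp] at h
  have : γ - (2:ℝ) • γ = -γ := by
    rw [two_smul]; abel
  rwa [this] at h

-- L1: sref formula
lemma osh_sref_apply {γ : E} (hγ : γ ≠ 0) (x : E) :
    sref γ x = x - (2 * ⟪x, γ⟫ / ⟪γ, γ⟫) • γ := by
  have h0 : sref γ x = 2 • ((Submodule.orthogonalProjectionOnto (Submodule.span ℝ {γ})ᗮ x : E)) - x :=
    Submodule.reflection_apply x
  have h1 : (Submodule.orthogonalProjectionOnto (Submodule.span ℝ {γ})ᗮ x : E)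
      = x - ((Submodule.orthogonalProjectionOnto (ℝ ∙ γ) x : E)) :=
    Submodule.starProjection_orthogonal_val x
  have h2 : ((Submodule.orthogonalProjectionOnto (ℝ ∙ γ) x : E)) = (⟪γ, x⟫ / ((‖γ‖ ^ 2 : ℝ) : ℝ)) • γ :=
    Submodule.starProjection_singleton ℝ x
  have hxγ : ⟪γ, x⟫ = ⟪x, γ⟫ := real_inner_comm x γ
  have hself : ⟪γ, γ⟫ = ‖γ‖ ^ 2 := real_inner_self_eq_norm_sq γ
  rw [h0, h1, h2, hxγ, hself]
  simp only [two_smul, smul_sub, sub_smul]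
  rw [show 2 * ⟪x, γ⟫ / ‖γ‖ ^ 2 = ⟪x, γ⟫ / ‖γ‖ ^ 2 + ⟪x, γ⟫ / ‖γ‖ ^ 2 by ring, add_smul]
  abel

lemma osh_sref_root {Φ : Finset E} (hΦ : IsRootSystem Φ) {a γ : E} (ha : a ∈ Φ) (hγ : γ ∈ Φ) :
    sref a γ ∈ Φ := by
  rw [osh_sref_apply (hΦ.nonzero a ha)]
  exact hΦ.reflect a ha γ hγ

-- coefficients vanish
lemma osh_indep {Φ Δ : Finset E} {c : E → E → ℝ} (hB : IsBase Φ Δ c) (g : E → ℝ)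
    (h : ∑ a ∈ Δ, g a • a = 0) : ∀ a ∈ Δ, g a = 0 := by
  have hind : LinearIndependent ℝ (fun x : {x // x ∈ Δ} => (x : E)) := hB.indep
  have h' : ∑ x ∈ Finset.univ (α := {x // x ∈ Δ}), g x • (x : E) = 0 := by
    rw [Finset.sum_coe_sort Δ (fun a => g a • a)] at *
    exact h
  intro a ha
  exact linearIndependent_iff'.mp hind Finset.univ (fun x => g x) h' ⟨a, ha⟩ (Finset.mem_univ _)

lemma osh_coord_eq {Φ Δ : Finset E} {c : E → E → ℝ} (hB : IsBase Φ Δ c) {y : E}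
    (hy : y ∈ Φ) {g : E → ℝ} (h : y = ∑ a ∈ Δ, g a • a) : ∀ a ∈ Δ, c y a = g a := by
  intro a ha
  have h2 : ∑ b ∈ Δ, (c y b - g b) • b = 0 := by
    simp only [sub_smul, Finset.sum_sub_distrib]
    rw [← hB.repr y hy, ← h, sub_self]
  have h3 := osh_indep hB (fun b => c y b - g b) h2 a ha
  linarith

lemma osh_coord_sub_smul {Φ Δ : Finset E} {c : E → E → ℝ} (hB : IsBase Φ Δ c) {γ α : E}
    (hγ : γ ∈ Φ) (hα : α ∈ Δ) {r : ℝ} (hγ' : γ - r • α ∈ Φ) :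
    ∀ b ∈ Δ, c (γ - r • α) b = c γ b - (if b = α then r else 0) := by
  have hrepr : γ - r • α = ∑ b ∈ Δ, (c γ b - (if b = α then r else 0)) • b := by
    simp only [sub_smul, Finset.sum_sub_distrib, ite_smul, zero_smul]
    rw [← hB.repr γ hγ, Finset.sum_ite_eq' Δ α (fun x => r • x), if_pos hα]
  exact osh_coord_eq hB hγ' hrepr

lemma osh_lev_pos {Φ Δ S : Finset E} {c : E → E → ℝ} {β : E} (hB : IsBase Φ Δ c)
    (hβpos : ∀ a ∈ Δ, 0 ≤ c β a) (hsupp : ∃ a ∈ S, c β a ≠ 0) (hS : S ⊆ Δ)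
    {γ : E} (hγ : γ ∈ lev Φ c S β) : ∀ a ∈ Δ, 0 ≤ c γ a := by
  rcases hB.sign γ hγ.1 with h | h
  · exact h
  · obtain ⟨a₀, ha₀S, ha₀⟩ := hsupp
    exfalso
    have h1 : c γ a₀ = c β a₀ := hγ.2 a₀ ha₀S
    have h2 := h a₀ (hS ha₀S)
    have h3 := hβpos a₀ (hS ha₀S)
    exact ha₀ (le_antisymm (by linarith) h3)

-- root subtraction
lemma osh_sub {Φ : Finset E} (hΦ : IsRootSystem Φ) {γ δ : E} (hγ : γ ∈ Φ) (hδ : δ ∈ Φ)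
    (hne : γ ≠ δ) (hpos : 0 < ⟪γ, δ⟫) : γ - δ ∈ Φ := by
  have hγ0 : γ ≠ 0 := hΦ.nonzero γ hγ
  have hδ0 : δ ≠ 0 := hΦ.nonzero δ hδ
  have hγn : (0:ℝ) < ‖γ‖ := norm_pos_iff.mpr hγ0
  have hδn : (0:ℝ) < ‖δ‖ := norm_pos_iff.mpr hδ0
  have hγγ : ⟪γ, γ⟫ = ‖γ‖ ^ 2 := real_inner_self_eq_norm_sq γ
  have hδδ : ⟪δ, δ⟫ = ‖δ‖ ^ 2 := real_inner_self_eq_norm_sq δ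
  obtain ⟨n, hn⟩ := hΦ.cry δ hδ γ hγ
  obtain ⟨m, hm⟩ := hΦ.cry γ hγ δ hδ
  have hcomm : ⟪δ, γ⟫ = ⟪γ, δ⟫ := real_inner_comm γ δ
  -- strict Cauchy-Schwarz
  have hcs : ⟪γ, δ⟫ < ‖γ‖ * ‖δ‖ := by
    rw [inner_lt_norm_mul_iff_real]
    intro hcontra
    have hδγ : δ = (‖δ‖ / ‖γ‖) • γ := by
      have h6 : ‖γ‖⁻¹ • (‖δ‖ • γ) = ‖γ‖⁻¹ • (‖γ‖ • δ) := by rw [hcontra]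
      rw [inv_smul_smul₀ (ne_of_gt hγn)] at h6
      conv_lhs => rw [← h6]
      rw [smul_smul, div_eq_inv_mul]
    have := hΦ.reduced γ hγ (‖δ‖ / ‖γ‖) (by rw [← hδγ]; exact hδ)
    rcases this with h1 | h1
    · apply hne
      have : δ = γ := by rw [hδγ, h1, one_smul]
      exact this.symm
    · have : (0:ℝ) < ‖δ‖ / ‖γ‖ := by positivity
      rw [h1] at this; norm_num at this
  have hδδpos : (0:ℝ) < ⟪δ, δ⟫ := by rw [hδδ]; positivity
  have hγγpos : (0:ℝ) < ⟪γ, γ⟫ := by rw [hγγ]; positivity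
  have hnpos : (0:ℝ) < n := by
    rw [← hn]; apply div_pos (by linarith) hδδpos
  have hmpos : (0:ℝ) < m := by
    rw [← hm, hcomm]; apply div_pos (by linarith) hγγpos
  have hn1 : 1 ≤ n := by exact_mod_cast hnpos
  have hm1 : 1 ≤ m := by exact_mod_cast hmpos
  have hprod : (n:ℝ) * m < 4 := by
    rw [← hn, ← hm, hcomm, hδδ, hγγ]
    have h4 : ⟪γ, δ⟫ * ⟪γ, δ⟫ < (‖γ‖ * ‖δ‖) * (‖γ‖ * ‖δ‖) := by
      have := mul_lt_mul_of_pos_left hcs hpos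
      have h5 := mul_lt_mul_of_pos_right hcs (by positivity : (0:ℝ) < ‖γ‖ * ‖δ‖)
      nlinarith
    rw [div_mul_div_comm]
    rw [div_lt_iff₀ (by positivity)]
    nlinarith
  have hcase : n = 1 ∨ m = 1 := by
    by_contra hc
    push_neg at hc
    have h1 : 2 ≤ n := by omega
    have h2 : 2 ≤ m := by omega
    have : (4:ℝ) ≤ (n:ℝ) * m := by
      have : (4:ℤ) ≤ n * m := by nlinarith
      exact_mod_cast this
    linarith
  rcases hcase with h1 | h1
  · have := hΦ.reflect δ hδ γ hγ
    rw [hn, h1] at this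
    simp only [Int.cast_one, one_smul] at this
    exact this
  · have := hΦ.reflect γ hγ δ hδ
    rw [hm, h1] at this
    simp only [Int.cast_one, one_smul] at this
    have h3 := osh_neg hΦ this
    simpa using h3

lemma osh_obtuse {Φ Δ : Finset E} {c : E → E → ℝ} (hΦ : IsRootSystem Φ) (hB : IsBase Φ Δ c)
    {a b : E} (ha : a ∈ Δ) (hb : b ∈ Δ) (hne : a ≠ b) : ⟪a, b⟫ ≤ 0 := by
  by_contra hc
  push_neg at hc
  have hab : a - b ∈ Φ := osh_sub hΦ (hB.subset ha) (hB.subset hb) hne hc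
  have hrepr : a - b = ∑ x ∈ Δ, ((if x = a then 1 else 0) - (if x = b then 1 else 0) : ℝ) • x := by
    simp only [sub_smul, Finset.sum_sub_distrib, ite_smul, zero_smul, one_smul]
    rw [Finset.sum_ite_eq' Δ a (fun x => x), Finset.sum_ite_eq' Δ b (fun x => x),
      if_pos ha, if_pos hb]
  have hco := osh_coord_eq hB hab hrepr
  have hca : c (a - b) a = 1 := by
    have := hco a ha; simp at this; simp [if_neg hne] at this; linarith
  have hcb : c (a - b) b = -1 := by
    have := hco b hb; simp at this; simp [if_neg (Ne.symm hne)] at this; linarith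
  rcases hB.sign (a - b) hab with h | h
  · have := h b hb; linarith
  · have := h a ha; linarith

lemma osh_unique {Φ Δ S : Finset E} {c : E → E → ℝ} {β : E}
    (hΦ : IsRootSystem Φ) (hB : IsBase Φ Δ c) (hS : S ⊆ Δ)
    (hβpos : ∀ a ∈ Δ, 0 ≤ c β a) (hsupp : ∃ a ∈ S, c β a ≠ 0)
    {γ γ' : E} (hγ : γ ∈ lev Φ c S β) (hγ' : γ' ∈ lev Φ c S β)
    (hnorm : ‖γ‖ = ‖γ'‖)
    (hd : ∀ α ∈ Δ \ S, ⟪γ, α⟫ ≤ 0) (hd' : ∀ α ∈ Δ \ S, ⟪γ', α⟫ ≤ 0) :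
    γ = γ' := by
  by_contra hne
  have hγΦ := hγ.1
  have hγ'Φ := hγ'.1
  set U : Submodule ℝ E := Submodule.span ℝ ((Δ \ S : Finset E) : Set E) with hU
  have hdiffrepr : γ - γ' = ∑ a ∈ Δ \ S, (c γ a - c γ' a) • a := by
    have h1 : γ = (∑ a ∈ Δ \ S, c γ a • a) + ∑ a ∈ S, c γ a • a := by
      rw [Finset.sum_sdiff hS]; exact hB.repr γ hγΦ
    have h2 : γ' = (∑ a ∈ Δ \ S, c γ' a • a) + ∑ a ∈ S, c γ' a • a := by
      rw [Finset.sum_sdiff hS]; exact hB.repr γ' hγ'Φ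
    have h3 : ∑ a ∈ S, c γ a • a = ∑ a ∈ S, c γ' a • a :=
      Finset.sum_congr rfl (fun a ha => by rw [hγ.2 a ha, hγ'.2 a ha])
    conv_lhs => rw [h1, h2, h3]
    simp only [sub_smul, Finset.sum_sub_distrib]
    abel
  have hdiffU : γ - γ' ∈ U := by
    rw [hdiffrepr]
    exact Submodule.sum_mem _ (fun a ha =>
      Submodule.smul_mem _ _ (Submodule.subset_span (by exact_mod_cast ha)))
  set v : E := (Submodule.orthogonalProjectionOnto U γ : E) with hv
  set v' : E := (Submodule.orthogonalProjectionOnto U γ' : E) with hv'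
  set z : E := γ - v with hzdef
  have hvU : v ∈ U := (Submodule.orthogonalProjectionOnto U γ).2
  have hv'U : v' ∈ U := (Submodule.orthogonalProjectionOnto U γ').2
  have hzU : z ∈ Uᗮ := Submodule.sub_starProjection_mem_orthogonal γ
  have hz'U : γ' - v' ∈ Uᗮ := Submodule.sub_starProjection_mem_orthogonal γ'
  have hvv : v - v' = γ - γ' := by
    have h1 : Submodule.orthogonalProjectionOnto U (γ - γ')
        = Submodule.orthogonalProjectionOnto U γ - Submodule.orthogonalProjectionOnto U γ' := map_sub _ _ _
    have h2 : ((Submodule.orthogonalProjectionOnto U (γ - γ') : U) : E) = γ - γ' :=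
      Submodule.starProjection_eq_self_iff.mpr hdiffU
    rw [h1, Submodule.coe_sub] at h2
    exact h2
  have hzz' : γ' - v' = z := by
    rw [hzdef]
    have : (γ - v) - (γ' - v') = (γ - γ') - (v - v') := by abel
    have h0 : (γ - v) - (γ' - v') = 0 := by rw [this, hvv, sub_self]
    have := sub_eq_zero.mp h0
    rw [this]
  have hγdecomp : γ = v + z := by rw [hzdef]; abel
  have hγ'decomp : γ' = v' + z := by rw [← hzz']; abel
  have hzofU : ∀ u ∈ U, ⟪u, z⟫ = 0 := fun u hu => (Submodule.mem_orthogonal U z).mp hzU u hu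
  have hinner : ⟪γ, γ'⟫ = ⟪v, v'⟫ + ⟪z, z⟫ := by
    conv_lhs => rw [hγdecomp, hγ'decomp]
    rw [inner_add_left, inner_add_right, inner_add_right]
    have e1 : ⟪v, z⟫ = 0 := hzofU v hvU
    have e2 : ⟪z, v'⟫ = 0 := by rw [real_inner_comm]; exact hzofU v' hv'U
    rw [e1, e2]
    ring
  -- inner products of α ∈ Δ\S with v, v'
  have hαv : ∀ α ∈ Δ \ S, ⟪α, v⟫ ≤ 0 := by
    intro α hα
    have hαU : (α : E) ∈ U := Submodule.subset_span (by exact_mod_cast hα)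
    have h0 : ⟪α, z⟫ = 0 := hzofU α hαU
    have h1 : ⟪α, γ⟫ = ⟪α, v + z⟫ := by rw [← hγdecomp]
    rw [inner_add_right, h0, add_zero] at h1
    rw [← h1, real_inner_comm]
    exact hd α hα
  have hαv' : ∀ α ∈ Δ \ S, ⟪α, v'⟫ ≤ 0 := by
    intro α hα
    have hαU : (α : E) ∈ U := Submodule.subset_span (by exact_mod_cast hα)
    have h0 : ⟪α, z⟫ = 0 := hzofU α hαU
    have h1 : ⟪α, γ'⟫ = ⟪α, v' + z⟫ := by rw [← hγ'decomp]
    rw [inner_add_right, h0, add_zero] at h1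
    rw [← h1, real_inner_comm]
    exact hd' α hα
  -- obtuse cone argument: ⟪v, v'⟫ ≥ 0
  obtain ⟨f, -, hf⟩ := Submodule.mem_span_finset.mp hvU
  set T : Finset E := (Δ \ S).filter (fun α => 0 < f α) with hT
  have hTsub : T ⊆ Δ \ S := Finset.filter_subset _ _
  set wv : E := ∑ α ∈ T, f α • α with hwv
  have hw_rest : v - wv = ∑ α ∈ (Δ \ S) \ T, f α • α := by
    have := Finset.sum_sdiff (f := fun α => f α • α) hTsub
    rw [hwv, ← hf, ← this]
    abel
  have hwvsq : ⟪wv, wv⟫ ≤ 0 := by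
    have h1 : ⟪wv, v⟫ ≤ 0 := by
      rw [hwv, sum_inner]
      apply Finset.sum_nonpos
      intro α hα
      have hαT := Finset.mem_filter.mp hα
      have h2 := hαv α hαT.1
      rw [real_inner_smul_left]
      nlinarith [hαT.2]
    have h2 : 0 ≤ ⟪wv, v - wv⟫ := by
      rw [hw_rest, hwv, sum_inner]
      apply Finset.sum_nonneg
      intro α hα
      have hαT := Finset.mem_filter.mp hα
      rw [real_inner_smul_left, inner_sum]
      apply mul_nonneg (le_of_lt hαT.2)
      apply Finset.sum_nonneg
      intro b hb
      have hbmem := Finset.mem_sdiff.mp hb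
      have hfb : f b ≤ 0 := by
        by_contra hcb
        push_neg at hcb
        exact hbmem.2 (Finset.mem_filter.mpr ⟨hbmem.1, hcb⟩)
      have hob : ⟪α, b⟫ ≤ 0 := by
        apply osh_obtuse hΦ hB (Finset.mem_sdiff.mp hαT.1).1 (Finset.mem_sdiff.mp hbmem.1).1
        intro heq
        exact hbmem.2 (heq ▸ hα)
      rw [real_inner_smul_right]
      nlinarith
    have h3 : ⟪wv, wv⟫ = ⟪wv, v⟫ - ⟪wv, v - wv⟫ := by
      rw [inner_sub_right]; ring
    linarith
  have hwv0 : wv = 0 := by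
    have h4 : ⟪wv, wv⟫ = 0 := le_antisymm hwvsq real_inner_self_nonneg
    exact inner_self_eq_zero.mp h4
  have hvrepr : v = ∑ α ∈ (Δ \ S) \ T, f α • α := by
    rw [← hw_rest, hwv0, sub_zero]
  have hvv'nonneg : 0 ≤ ⟪v, v'⟫ := by
    rw [hvrepr, sum_inner]
    apply Finset.sum_nonneg
    intro α hα
    have hαmem := Finset.mem_sdiff.mp hα
    have hfα : f α ≤ 0 := by
      by_contra hcb
      push_neg at hcb
      exact hαmem.2 (Finset.mem_filter.mpr ⟨hαmem.1, hcb⟩)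
    have := hαv' α hαmem.1
    rw [real_inner_smul_left]
    nlinarith
  -- z ≠ 0
  have hγnotU : γ ∉ U := by
    intro hγU
    obtain ⟨g, -, hg⟩ := Submodule.mem_span_finset.mp hγU
    obtain ⟨a₀, ha₀S, ha₀⟩ := hsupp
    have hzero : ∑ a ∈ Δ, (c γ a - (if a ∈ S then 0 else g a)) • a = 0 := by
      simp only [sub_smul, Finset.sum_sub_distrib]
      rw [← hB.repr γ hγΦ]
      have hsplit : ∑ a ∈ Δ, (if a ∈ S then (0:ℝ) else g a) • a = ∑ a ∈ Δ \ S, g a • a := by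
        rw [← Finset.sum_sdiff hS]
        have hSpart : ∑ a ∈ S, (if a ∈ S then (0:ℝ) else g a) • a = 0 :=
          Finset.sum_eq_zero (fun a ha => by rw [if_pos ha, zero_smul])
        have hDpart : ∑ a ∈ Δ \ S, (if a ∈ S then (0:ℝ) else g a) • a
            = ∑ a ∈ Δ \ S, g a • a :=
          Finset.sum_congr rfl (fun a ha => by rw [if_neg (Finset.mem_sdiff.mp ha).2])
        rw [hSpart, hDpart, add_zero]
      rw [hsplit, hg, sub_self]
    have h5 := osh_indep hB _ hzero a₀ (hS ha₀S)
    simp only [if_pos ha₀S, sub_zero] at h5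
    exact ha₀ (by rw [← hγ.2 a₀ ha₀S]; exact h5)
  have hzne : z ≠ 0 := by
    intro h0
    exact hγnotU (by rw [hγdecomp, h0, add_zero]; exact hvU)
  have hzpos : 0 < ⟪z, z⟫ := by
    rw [real_inner_self_eq_norm_sq]
    have := norm_pos_iff.mpr hzne
    positivity
  have hγγ'pos : 0 < ⟪γ, γ'⟫ := by rw [hinner]; linarith
  -- δ is a root
  have hδΦ : γ - γ' ∈ Φ := osh_sub hΦ hγΦ hγ'Φ hne hγγ'pos
  have hδrepr2 : γ - γ' = ∑ a ∈ Δ, (if a ∈ S then 0 else (c γ a - c γ' a)) • a := by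
    rw [← Finset.sum_sdiff hS]
    have hSpart : ∑ a ∈ S, (if a ∈ S then (0:ℝ) else (c γ a - c γ' a)) • a = 0 :=
      Finset.sum_eq_zero (fun a ha => by rw [if_pos ha, zero_smul])
    have hDpart : ∑ a ∈ Δ \ S, (if a ∈ S then (0:ℝ) else (c γ a - c γ' a)) • a
        = ∑ a ∈ Δ \ S, (c γ a - c γ' a) • a :=
      Finset.sum_congr rfl (fun a ha => by rw [if_neg (Finset.mem_sdiff.mp ha).2])
    rw [hSpart, hDpart, add_zero]
    exact hdiffrepr
  have hcδ := osh_coord_eq hB hδΦ hδrepr2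
  have hcomm : ⟪γ', γ⟫ = ⟪γ, γ'⟫ := real_inner_comm γ γ'
  have hipz : ⟪γ, γ - γ'⟫ + ⟪γ', γ - γ'⟫ = 0 := by
    rw [inner_sub_right, inner_sub_right, real_inner_self_eq_norm_sq, real_inner_self_eq_norm_sq,
      hcomm, hnorm]
    ring
  have hδδpos : 0 < ⟪γ - γ', γ - γ'⟫ := by
    rw [real_inner_self_eq_norm_sq]
    have := norm_pos_iff.mpr (sub_ne_zero.mpr hne)
    positivity
  have hipd : ⟪γ, γ - γ'⟫ - ⟪γ', γ - γ'⟫ = ⟪γ - γ', γ - γ'⟫ := by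
    rw [← inner_sub_left]
  have hAp : 0 < ⟪γ, γ - γ'⟫ := by linarith
  have hBp : ⟪γ', γ - γ'⟫ < 0 := by linarith
  have hsum : ∀ y : E, ⟪y, γ - γ'⟫ = ∑ a ∈ Δ \ S, (c γ a - c γ' a) * ⟪y, a⟫ := by
    intro y
    conv_lhs => rw [hdiffrepr]
    rw [inner_sum]
    exact Finset.sum_congr rfl (fun a ha => real_inner_smul_right y a _)
  rcases hB.sign (γ - γ') hδΦ with hsg | hsg
  · have hcon : ⟪γ, γ - γ'⟫ ≤ 0 := by
      rw [hsum γ]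
      apply Finset.sum_nonpos
      intro a ha
      have haΔ := (Finset.mem_sdiff.mp ha).1
      have haS := (Finset.mem_sdiff.mp ha).2
      have hcoef : 0 ≤ c γ a - c γ' a := by
        have h6 := hsg a haΔ
        rw [hcδ a haΔ, if_neg haS] at h6
        exact h6
      exact mul_nonpos_of_nonneg_of_nonpos hcoef (hd a ha)
    linarith
  · have hcon : 0 ≤ ⟪γ', γ - γ'⟫ := by
      rw [hsum γ']
      apply Finset.sum_nonneg
      intro a ha
      have haΔ := (Finset.mem_sdiff.mp ha).1
      have haS := (Finset.mem_sdiff.mp ha).2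
      have hcoef : c γ a - c γ' a ≤ 0 := by
        have h6 := hsg a haΔ
        rw [hcδ a haΔ, if_neg haS] at h6
        exact h6
      have h7 := hd' a ha
      nlinarith [mul_nonneg (neg_nonneg.mpr hcoef) (neg_nonneg.mpr h7)]
    linarith

lemma osh_step {Φ Δ S : Finset E} {c : E → E → ℝ} {β : E}
    (hΦ : IsRootSystem Φ) (hB : IsBase Φ Δ c) (hS : S ⊆ Δ)
    {γ α : E} (hγ : γ ∈ lev Φ c S β) (hα : α ∈ Δ \ S) (hpos : 0 < ⟪γ, α⟫) :
    sref α γ ∈ lev Φ c S β ∧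
    (∑ b ∈ Δ \ S, c (sref α γ) b) ≤ (∑ b ∈ Δ \ S, c γ b) - 1 := by
  have hαΔ : α ∈ Δ := (Finset.mem_sdiff.mp hα).1
  have hαS : α ∉ S := (Finset.mem_sdiff.mp hα).2
  have hαΦ : α ∈ Φ := hB.subset hαΔ
  have hα0 : α ≠ (0:E) := hΦ.nonzero α hαΦ
  have hγΦ : γ ∈ Φ := hγ.1
  set r : ℝ := 2 * ⟪γ, α⟫ / ⟪α, α⟫ with hrdef
  have hr : sref α γ = γ - r • α := osh_sref_apply hα0 γ
  have hmem : sref α γ ∈ Φ := osh_sref_root hΦ hαΦ hγΦ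
  have hmem' : γ - r • α ∈ Φ := hr ▸ hmem
  obtain ⟨k, hk⟩ := hΦ.cry α hαΦ γ hγΦ
  have hααpos : (0:ℝ) < ⟪α, α⟫ := by
    rw [real_inner_self_eq_norm_sq]
    have := norm_pos_iff.mpr hα0
    positivity
  have hrpos : 0 < r := by
    rw [hrdef]
    apply div_pos (by linarith) hααpos
  have hrk : r = (k:ℝ) := hk
  have hk1 : 1 ≤ k := by
    have : (0:ℝ) < (k:ℝ) := hrk ▸ hrpos
    exact_mod_cast this
  have hr1 : (1:ℝ) ≤ r := by rw [hrk]; exact_mod_cast hk1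
  have hc := osh_coord_sub_smul hB hγΦ hαΔ hmem'
  constructor
  · rw [hr]
    refine ⟨hmem', ?_⟩
    intro a ha
    have hne : a ≠ α := fun h => hαS (h ▸ ha)
    rw [hc a (hS ha), if_neg hne, sub_zero]
    exact hγ.2 a ha
  · rw [hr]
    have hsum : ∑ b ∈ Δ \ S, c (γ - r • α) b
        = (∑ b ∈ Δ \ S, c γ b) - r := by
      have h1 : ∀ b ∈ Δ \ S, c (γ - r • α) b = c γ b - (if b = α then r else 0) :=
        fun b hb => hc b (Finset.mem_sdiff.mp hb).1
      rw [Finset.sum_congr rfl h1, Finset.sum_sub_distrib,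
        Finset.sum_ite_eq' (Δ \ S) α (fun _ => r), if_pos hα]
    rw [hsum]
    linarith

lemma osh_descent {Φ Δ S : Finset E} {c : E → E → ℝ} {β : E}
    (hΦ : IsRootSystem Φ) (hB : IsBase Φ Δ c) (hS : S ⊆ Δ)
    (hβpos : ∀ a ∈ Δ, 0 ≤ c β a) (hsupp : ∃ a ∈ S, c β a ≠ 0) :
    ∀ N : ℕ, ∀ γ, γ ∈ lev Φ c S β → (∑ α ∈ Δ \ S, c γ α) ≤ N →
    ∃ w ∈ Subgroup.closure {g : E ≃ₗᵢ[ℝ] E | ∃ a ∈ Δ \ S, g = sref a},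
      w γ ∈ lev Φ c S β ∧ ∀ α ∈ Δ \ S, ⟪(w γ : E), α⟫ ≤ 0 := by
  intro N
  induction N with
  | zero =>
    intro γ hγ hm
    by_cases hanti : ∀ α ∈ Δ \ S, ⟪γ, α⟫ ≤ 0
    · refine ⟨1, Subgroup.one_mem _, ?_⟩
      simp only [LinearIsometryEquiv.coe_one, id_eq]
      exact ⟨hγ, hanti⟩
    · exfalso
      push_neg at hanti
      obtain ⟨α, hα, hpos⟩ := hanti
      obtain ⟨hlev1, hsum1⟩ := osh_step hΦ hB hS hγ hα hpos
      have hnn : 0 ≤ ∑ b ∈ Δ \ S, c (sref α γ) b := by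
        apply Finset.sum_nonneg
        intro b hb
        exact osh_lev_pos hB hβpos hsupp hS hlev1 b (Finset.mem_sdiff.mp hb).1
      simp only [Nat.cast_zero] at hm
      linarith
  | succ n ih =>
    intro γ hγ hm
    by_cases hanti : ∀ α ∈ Δ \ S, ⟪γ, α⟫ ≤ 0
    · refine ⟨1, Subgroup.one_mem _, ?_⟩
      simp only [LinearIsometryEquiv.coe_one, id_eq]
      exact ⟨hγ, hanti⟩
    · push_neg at hanti
      obtain ⟨α, hα, hpos⟩ := hanti
      obtain ⟨hlev1, hsum1⟩ := osh_step hΦ hB hS hγ hα hpos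
      have hm1 : (∑ b ∈ Δ \ S, c (sref α γ) b) ≤ (n : ℝ) := by
        push_cast at hm ⊢
        linarith
      obtain ⟨w', hw'mem, hw'lev, hw'anti⟩ := ih (sref α γ) hlev1 hm1
      refine ⟨w' * sref α, ?_, ?_, ?_⟩
      · exact Subgroup.mul_mem _ hw'mem (Subgroup.subset_closure ⟨α, hα, rfl⟩)
      · rw [LinearIsometryEquiv.coe_mul]
        exact hw'lev
      · rw [LinearIsometryEquiv.coe_mul]
        exact hw'anti

lemma osh_main {Φ Δ S : Finset E} {c : E → E → ℝ} {β : E}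
    (hΦ : IsRootSystem Φ) (hB : IsBase Φ Δ c) (hS : S ⊆ Δ)
    (hβpos : ∀ a ∈ Δ, 0 ≤ c β a) (hsupp : ∃ a ∈ S, c β a ≠ 0)
    {γ γ' : E} (hγ : γ ∈ lev Φ c S β) (hγ' : γ' ∈ lev Φ c S β)
    (hnorm : ‖γ‖ = ‖γ'‖) :
    ∃ w ∈ Subgroup.closure {g : E ≃ₗᵢ[ℝ] E | ∃ a ∈ Δ \ S, g = sref a}, w γ = γ' := by
  obtain ⟨w, hwmem, hwlev, hwanti⟩ := osh_descent hΦ hB hS hβpos hsupp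
    ⌈∑ α ∈ Δ \ S, c γ α⌉₊ γ hγ (Nat.le_ceil _)
  obtain ⟨w', hw'mem, hw'lev, hw'anti⟩ := osh_descent hΦ hB hS hβpos hsupp
    ⌈∑ α ∈ Δ \ S, c γ' α⌉₊ γ' hγ' (Nat.le_ceil _)
  have hnorm2 : ‖w γ‖ = ‖w' γ'‖ := by
    rw [LinearIsometryEquiv.norm_map, LinearIsometryEquiv.norm_map, hnorm]
  have heq : w γ = w' γ' :=
    osh_unique hΦ hB hS hβpos hsupp hwlev hw'lev hnorm2 hwanti hw'anti
  refine ⟨w'⁻¹ * w, Subgroup.mul_mem _ (Subgroup.inv_mem _ hw'mem) hwmem, ?_⟩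
  rw [LinearIsometryEquiv.coe_mul, Function.comp_apply, heq]
  have h9 : (w'⁻¹ * w') γ' = γ' := by
    rw [inv_mul_cancel]
    simp [LinearIsometryEquiv.coe_one]
  rw [LinearIsometryEquiv.coe_mul, Function.comp_apply] at h9
  exact h9

/-- Oshima's Lemma: the parabolic subgroup `W⟨Π \ S⟩` acts transitively on the long
roots of `Φ_{S,β}` and transitively on the short roots of `Φ_{S,β}`. -/
theorem stmt10 (Φ Δ : Finset E) (c : E → E → ℝ)
    (hΦ : IsRootSystem Φ) (hB : IsBase Φ Δ c) (hirr : IsIrredSys Φ)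
    (S : Finset E) (hS : S ⊆ Δ) (β : E) (hβ : β ∈ Φ)
    (hβpos : ∀ a ∈ Δ, 0 ≤ c β a) (hsupp : ∃ a ∈ S, c β a ≠ 0) :
    (∀ γ ∈ lev Φ c S β, ∀ γ' ∈ lev Φ c S β,
      (∀ δ ∈ Φ, ‖δ‖ ≤ ‖γ‖) → (∀ δ ∈ Φ, ‖δ‖ ≤ ‖γ'‖) →
      ∃ w ∈ Subgroup.closure {g : E ≃ₗᵢ[ℝ] E | ∃ a ∈ Δ \ S, g = sref a}, w γ = γ') ∧
    (∀ γ ∈ lev Φ c S β, ∀ γ' ∈ lev Φ c S β,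
      (∀ δ ∈ Φ, ‖γ‖ ≤ ‖δ‖) → (∀ δ ∈ Φ, ‖γ'‖ ≤ ‖δ‖) →
      ∃ w ∈ Subgroup.closure {g : E ≃ₗᵢ[ℝ] E | ∃ a ∈ Δ \ S, g = sref a}, w γ = γ') := by
  constructor
  · intro γ hγ γ' hγ' hlong hlong'
    exact osh_main hΦ hB hS hβpos hsupp hγ hγ'
      (le_antisymm (hlong' γ hγ.1) (hlong γ' hγ'.1))
  · intro γ hγ γ' hγ' hshort hshort'
    exact osh_main hΦ hB hS hβpos hsupp hγ hγ'
      (le_antisymm (hshort γ' hγ'.1) (hshort' γ hγ.1))
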